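/- For every integer n ≥ 1, the set PConj_n of all automorphisms α of the free group F_n for which there exist words w_1, …, w_n ∈ F_n with α(x_i) = w_i⁻¹ x_i w_i for all i (the basis-conjugating automorphisms), is a subgroup of Aut(F_n), and this subgroup equals the subgroup of Aut(F_n) generated by the automorphisms {α_{ij} : 1 ≤ i ≠ j ≤ n}. -/

import Mathlib

set_option linter.unusedSectionVars false

namespace LoopBraidGroups

open FreeGroup List

/-- The `i`-th generator `x_i` of the free group of rank `n`
(with junk value `1` when `i ≥ n`); indices are `0`-based. -/
def xg (n i : ℕ) : FreeGroup (Fin n) :=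
  if h : i < n then FreeGroup.of (⟨i, h⟩ : Fin n) else 1

/-- `IsAlpha n i j a` : `a` is the automorphism `α_{ij}` of the free group of rank `n`,
sending `x_i ↦ x_j⁻¹ x_i x_j` and fixing the other generators. -/
def IsAlpha (n i j : ℕ) (a : MulAut (FreeGroup (Fin n))) : Prop :=
  a (xg n i) = (xg n j)⁻¹ * xg n i * xg n j ∧
    ∀ k, k < n → k ≠ i → a (xg n k) = xg n k

/-- The set `PConj_n` of basis-conjugating automorphisms `α` of the free group of
rank `n`: those with `α(x_i) = w_i⁻¹ x_i w_i` for some words `w_i`. -/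
def PConjSet (n : ℕ) : Set (MulAut (FreeGroup (Fin n))) :=
  {α | ∃ w : Fin n → FreeGroup (Fin n),
      ∀ i : Fin n, α (FreeGroup.of i) = (w i)⁻¹ * FreeGroup.of i * w i}

section Words
variable {α : Type*} [DecidableEq α]

/-- `Ok p q` : the two letters do not cancel when adjacent (p then q). -/
def Ok (p q : α × Bool) : Prop := ¬(p.1 = q.1 ∧ p.2 = !q.2)

/-- A word is reduced. -/
def Rd (L : List (α × Bool)) : Prop := List.Chain' Ok L

lemma Rd.reduce_eq {L : List (α × Bool)} (h : Rd L) : FreeGroup.reduce L = L := by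
  induction L with
  | nil => rfl
  | cons x t ih =>
    have ht : Rd t := (List.isChain_cons.mp h).2
    rw [FreeGroup.reduce.cons, ih ht]
    cases t with
    | nil => rfl
    | cons q t2 =>
      have hok : Ok x q := (List.isChain_cons_cons.mp h).1
      simp only [Ok] at hok
      change (if x.1 = q.1 ∧ x.2 = !q.2 then t2 else x :: q :: t2) = x :: q :: t2
      rw [if_neg hok]

lemma exists_bad {L : List (α × Bool)} (h : ¬ Rd L) :
    ∃ (l1 : List (α × Bool)) (x : α) (b : Bool) (l2 : List (α × Bool)),
      L = l1 ++ (x, b) :: (x, !b) :: l2 := by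
  induction L with
  | nil => exact absurd List.isChain_nil h
  | cons p t ih =>
    cases t with
    | nil => exact absurd (List.isChain_singleton p) h
    | cons q t2 =>
      rw [Rd, List.Chain', List.isChain_cons_cons] at h
      push_neg at h
      by_cases hok : Ok p q
      · obtain ⟨l1, x, b, l2, heq⟩ := ih (h hok)
        exact ⟨p :: l1, x, b, l2, by rw [List.cons_append, ← heq]⟩
      · simp only [Ok, not_not] at hok
        refine ⟨[], p.1, p.2, t2, ?_⟩
        have hq : q = (p.1, !p.2) := by
          obtain ⟨h1, h2⟩ := hok
          have h3 : q.2 = !p.2 := by rw [h2]; cases q.2 <;> rfl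
          rw [h1, ← h3]
        simp only [List.nil_append, ← hq]

lemma Rd.of_reduce {L : List (α × Bool)} (h : FreeGroup.reduce L = L) : Rd L := by
  by_contra hb
  obtain ⟨l1, x, b, l2, rfl⟩ := exists_bad hb
  have hstep : FreeGroup.Red.Step (l1 ++ (x, b) :: (x, !b) :: l2) (l1 ++ l2) :=
    FreeGroup.Red.Step.not
  have := FreeGroup.reduce.Step.eq hstep
  have hlen : (FreeGroup.reduce (l1 ++ l2)).length ≤ (l1 ++ l2).length :=
    (FreeGroup.Red.length_le (FreeGroup.reduce.red))
  rw [← this, h] at hlen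
  simp [List.length_append] at hlen

lemma rd_toWord (x : FreeGroup α) : Rd (toWord x) := Rd.of_reduce (FreeGroup.reduce_toWord x)

lemma Rd.toWord_mk {L : List (α × Bool)} (h : Rd L) : (FreeGroup.mk L).toWord = L := by
  rw [FreeGroup.toWord_mk, h.reduce_eq]

lemma invRev_append (A B : List (α × Bool)) :
    FreeGroup.invRev (A ++ B) = FreeGroup.invRev B ++ FreeGroup.invRev A := by
  simp [FreeGroup.invRev]

lemma invRev_singleton (p : α × Bool) : FreeGroup.invRev [p] = [(p.1, !p.2)] := by
  simp [FreeGroup.invRev]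

lemma Ok.inv {p q : α × Bool} (h : Ok p q) : Ok (q.1, !q.2) (p.1, !p.2) := by
  simp only [Ok] at h ⊢
  rintro ⟨h1, h2⟩
  exact h ⟨h1.symm, by revert h2; cases p.2 <;> cases q.2 <;> simp⟩

lemma Rd.invRev {L : List (α × Bool)} (h : Rd L) : Rd (FreeGroup.invRev L) := by
  rw [Rd, List.Chain', FreeGroup.invRev, List.isChain_reverse]
  rw [List.isChain_map]
  rw [Rd] at h
  refine List.IsChain.imp ?_ h
  intro a b hab
  exact hab.inv

end Words

section Lists
variable {β : Type*}

lemma common_prefix (U : List β) : ∀ (V : List β), ∃ s P Q,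
    U = s ++ P ∧ V = s ++ Q ∧ (P = [] ∨ Q = [] ∨ P.head? ≠ Q.head?) := by
  classical
  induction U with
  | nil => intro V; exact ⟨[], [], V, rfl, rfl, Or.inl rfl⟩
  | cons x U ih =>
    intro V
    cases V with
    | nil => exact ⟨[], x :: U, [], rfl, rfl, Or.inr (Or.inl rfl)⟩
    | cons z V =>
      by_cases hxz : x = z
      · obtain ⟨s, P, Q, h1, h2, h3⟩ := ih V
        exact ⟨x :: s, P, Q, by simp [h1], by simp [h2, hxz], h3⟩
      · refine ⟨[], x :: U, z :: V, rfl, rfl, Or.inr (Or.inr ?_)⟩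
        simp [hxz]

lemma common_suffix (U V : List β) : ∃ P Q s,
    U = P ++ s ∧ V = Q ++ s ∧ (P = [] ∨ Q = [] ∨ P.getLast? ≠ Q.getLast?) := by
  obtain ⟨s, P, Q, h1, h2, h3⟩ := common_prefix U.reverse V.reverse
  refine ⟨P.reverse, Q.reverse, s.reverse, ?_, ?_, ?_⟩
  · rw [← List.reverse_reverse U, h1]; simp
  · rw [← List.reverse_reverse V, h2]; simp
  · rcases h3 with h | h | h
    · exact Or.inl (by simp [h])
    · exact Or.inr (Or.inl (by simp [h]))
    · refine Or.inr (Or.inr ?_)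
      rwa [List.getLast?_reverse, List.getLast?_reverse]

end Lists

section Words2
variable {α : Type*}

lemma invRev_head? (L : List (α × Bool)) :
    (FreeGroup.invRev L).head? = L.getLast?.map (fun x => (x.1, !x.2)) := by
  rw [FreeGroup.invRev, List.head?_reverse, List.getLast?_map]

lemma invRev_getLast? (L : List (α × Bool)) :
    (FreeGroup.invRev L).getLast? = L.head?.map (fun x => (x.1, !x.2)) := by
  rw [FreeGroup.invRev, List.getLast?_reverse, List.head?_map]

lemma mk_cancel (X t Z : List (α × Bool)) :
    FreeGroup.mk (X ++ (t ++ (FreeGroup.invRev t ++ Z))) = FreeGroup.mk (X ++ Z) := by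
  rw [← FreeGroup.mul_mk, ← FreeGroup.mul_mk, ← FreeGroup.mul_mk, ← FreeGroup.inv_mk]
  rw [← FreeGroup.mul_mk]
  group

end Words2

section Conj
variable {n : ℕ} (W : Fin n → List (Fin n × Bool))

/-- The reduced word of `(w i)⁻¹ xᵢ^{±1} (w i)`. -/
def Yw (p : Fin n × Bool) : List (Fin n × Bool) :=
  FreeGroup.invRev (W p.1) ++ p :: W p.1

variable (hd1 : ∀ (i : Fin n), ∀ x ∈ (W i).head?, x.1 ≠ i)
variable (hd2 : ∀ (i j : Fin n) (u : List (Fin n × Bool)) (b : Bool),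
    i ≠ j → W j ≠ u ++ (i, b) :: W i)

include hd1 in
lemma rd_Yw (hrd : ∀ i, Rd (W i)) (p : Fin n × Bool) : Rd (Yw W p) := by
  refine List.isChain_append.2 ⟨(hrd p.1).invRev, ?_, ?_⟩
  · refine List.isChain_cons.2 ⟨?_, hrd p.1⟩
    intro z hz
    have := hd1 p.1 z hz
    exact fun hc => this hc.1.symm
  · intro x hx z hz
    rw [List.head?_cons, Option.mem_some_iff] at hz
    subst hz
    rw [invRev_getLast?, Option.mem_def, Option.map_eq_some_iff] at hx
    obtain ⟨c, hc, rfl⟩ := hx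
    have := hd1 p.1 c hc
    exact fun hcon => this hcon.1

lemma invRev_Yw (p : Fin n × Bool) :
    FreeGroup.invRev (Yw W p) = Yw W (p.1, !p.2) := by
  show FreeGroup.invRev (FreeGroup.invRev (W p.1) ++ ([p] ++ W p.1)) = _
  rw [invRev_append, invRev_append, FreeGroup.invRev_invRev, invRev_singleton]
  show (FreeGroup.invRev (W p.1) ++ [(p.1, !p.2)]) ++ W p.1 = _
  rw [Yw, List.append_assoc]
  rfl

include hd1 hd2 in
lemma pair_lemma (p q : Fin n × Bool) (hpq : ¬(p.1 = q.1 ∧ q.2 = !p.2)) :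
    ∃ t A B, Yw W p = A ++ t ∧ Yw W q = FreeGroup.invRev t ++ B ∧ A ≠ [] ∧ B ≠ [] ∧
      t.length ≤ (W p.1).length ∧ t.length ≤ (W q.1).length ∧
      ∀ x ∈ A.getLast?, ∀ z ∈ B.head?, Ok x z := by
  by_cases h1 : p.1 = q.1
  · -- same generator, same sign: q = p
    have hq2 : q.2 = p.2 := by
      by_contra hne
      exact hpq ⟨h1, by revert hne; cases p.2 <;> cases q.2 <;> simp⟩
    have hq : p = q := Prod.ext h1 hq2.symm
    subst q
    refine ⟨W p.1, FreeGroup.invRev (W p.1) ++ [p], p :: W p.1, ?_, rfl, ?_, ?_, le_rfl, le_rfl, ?_⟩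
    · rw [Yw, List.append_assoc]; rfl
    · simp
    · simp
    · intro x hx z hz
      rw [List.getLast?_append_cons, List.getLast?_singleton, Option.mem_some_iff] at hx
      rw [List.head?_cons, Option.mem_some_iff] at hz
      subst x; subst z
      exact fun hc => by simpa using hc.2
  · -- different generators
    obtain ⟨P, Q, s, hU, hV, hmax⟩ := common_suffix (W p.1) (W q.1)
    refine ⟨s, FreeGroup.invRev (W p.1) ++ p :: P, FreeGroup.invRev Q ++ q :: W q.1,
      ?_, ?_, ?_, ?_, ?_, ?_, ?_⟩
    · rw [Yw, List.append_assoc, List.cons_append, hU]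
    · rw [Yw, hV, invRev_append, List.append_assoc]
    · simp
    · simp
    · rw [hU]; simp
    · rw [hV]; simp
    · intro x hx z hz
      rw [List.getLast?_append_cons] at hx
      have hzval : (Q = [] ∧ z = q) ∨ (∃ lq, Q.getLast? = some lq ∧ z = (lq.1, !lq.2) ∧ Q ≠ []) := by
        rcases Q.eq_nil_or_concat with hQ | ⟨Q', lq, hQ⟩
        · subst hQ
          left
          have : q = z := by simpa [FreeGroup.invRev] using hz
          exact ⟨rfl, this.symm⟩
        · right
          have hQne : Q ≠ [] := by subst hQ; simp
          have hlast : Q.getLast? = some lq := by subst hQ; simp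
          refine ⟨lq, hlast, ?_, hQne⟩
          have : (FreeGroup.invRev Q).head? = some (lq.1, !lq.2) := by
            rw [invRev_head?, hlast]; rfl
          rw [List.head?_append_of_ne_nil] at hz
          · rw [this, Option.mem_some_iff] at hz; exact hz.symm
          · intro hcon
            rw [hcon] at this; simp at this
      rcases P.eq_nil_or_concat with hP | ⟨P', lp, hP⟩
      · subst hP
        rw [List.getLast?_singleton, Option.mem_some_iff] at hx
        subst x
        rcases hzval with ⟨hQnil, hzq⟩ | ⟨lq, hlast, rfl, hQne⟩
        · subst z
          exact fun hc => h1 hc.1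
        · rintro ⟨hc1, hc2⟩
          rw [Bool.not_not] at hc2
          have hlq : lq = p := Prod.ext hc1.symm hc2.symm
          subst lq
          refine hd2 p.1 q.1 Q.dropLast p.2 h1 ?_
          have hQd : Q = Q.dropLast ++ [p] := (List.dropLast_append_getLast? _ hlast).symm
          rw [hV, hU, List.nil_append]
          conv_lhs => rw [hQd]
          rw [List.append_assoc]
          rfl
      · have hPne : P ≠ [] := by subst hP; simp
        have hlastP : P.getLast? = some lp := by subst hP; simp
        have hxval : lp = x := by
          rw [List.getLast?_cons, hlastP] at hx
          simpa using hx
        subst x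
        rcases hzval with ⟨hQnil, hzq⟩ | ⟨lq, hlast, rfl, hQne⟩
        · subst z
          subst hQnil
          rintro ⟨hc1, hc2⟩
          refine hd2 q.1 p.1 P.dropLast (!q.2) (fun hc => h1 hc.symm) ?_
          have hPd : P = P.dropLast ++ [lp] := (List.dropLast_append_getLast? _ hlastP).symm
          have hlp : lp = (q.1, !q.2) := Prod.ext hc1 hc2
          rw [hU, hV, List.nil_append]
          conv_lhs => rw [hPd]
          rw [List.append_assoc, hlp]
          rfl
        · rintro ⟨hc1, hc2⟩
          rw [Bool.not_not] at hc2
          have : lp = lq := Prod.ext hc1 hc2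
          rcases hmax with h | h | h
          · exact hPne h
          · exact hQne h
          · rw [hlastP, hlast, this] at h; exact h rfl

/-- The group element represented by the conjugated generator word. -/
def yel (p : Fin n × Bool) : FreeGroup (Fin n) := FreeGroup.mk (Yw W p)

/-- Product of a list of `yel`'s. -/
def listProd (ps : List (Fin n × Bool)) : FreeGroup (Fin n) := (ps.map (yel W)).prod

lemma length_Yw (p : Fin n × Bool) : (Yw W p).length = 2 * (W p.1).length + 1 := by
  simp [Yw, FreeGroup.invRev_length]
  omega

include hd1 in
lemma toWord_yel (hrd : ∀ i, Rd (W i)) (p : Fin n × Bool) :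
    (yel W p).toWord = Yw W p := (rd_Yw W hd1 hrd p).toWord_mk

include hd1 hd2 in
lemma chain_lemma (hrd : ∀ i, Rd (W i)) :
    ∀ (ps : List (Fin n × Bool)) (p : Fin n × Bool),
    List.Chain (fun u v => ¬(u.1 = v.1 ∧ v.2 = !u.2)) p ps →
    ∃ A t Z, Yw W p = A ++ t ∧ t.length ≤ (W p.1).length ∧
      (listProd W (p :: ps)).toWord = A ++ Z ∧
      ps.length + 1 ≤ ((listProd W (p :: ps)).toWord).length := by
  intro ps
  induction ps with
  | nil =>
    intro p _
    have hprod : listProd W [p] = yel W p := by simp [listProd]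
    refine ⟨Yw W p, [], [], by simp, by simp, ?_, ?_⟩
    · rw [hprod, toWord_yel W hd1 hrd p, List.append_nil]
    · rw [hprod, toWord_yel W hd1 hrd p, length_Yw]
      simp
  | cons q ps' ih =>
    intro p hch
    rw [List.Chain, List.isChain_cons_cons] at hch
    obtain ⟨hpq, hch'⟩ := hch
    obtain ⟨Aq, t', Z', hYq, ht', hPW, hlen⟩ := ih q hch'
    obtain ⟨t, A, B, hYp, hYq2, hAne, hBne, htp, htq, hjunc⟩ := pair_lemma W hd1 hd2 p q hpq
    have lYq := length_Yw W q
    have lYp := length_Yw W p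
    have hAqlen : Aq.length + t'.length = (Yw W q).length := by
      rw [hYq, List.length_append]
    have hABlen : t.length + B.length = (Yw W q).length := by
      rw [hYq2, List.length_append, FreeGroup.invRev_length]
    have hAlen : A.length + t.length = (Yw W p).length := by
      rw [hYp, List.length_append]
    have hlt : t.length ≤ Aq.length := by omega
    have heq : FreeGroup.invRev t ++ B = Aq ++ t' := by rw [← hYq, ← hYq2]
    have htake : FreeGroup.invRev t = Aq.take t.length := by
      have h1 : (FreeGroup.invRev t ++ B).take t.length = FreeGroup.invRev t := by
        have := List.take_left (l₁ := FreeGroup.invRev t) (l₂ := B)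
        rwa [FreeGroup.invRev_length] at this
      have h2 : (Aq ++ t').take t.length = Aq.take t.length :=
        List.take_append_of_le_length hlt
      rw [← h1, heq, h2]
    have hC1 : Aq = FreeGroup.invRev t ++ Aq.drop t.length := by
      conv_lhs => rw [← List.take_append_drop t.length Aq]
      rw [← htake]
    set C := Aq.drop t.length with hCdef
    have hC2 : B = C ++ t' := by
      have : FreeGroup.invRev t ++ B = FreeGroup.invRev t ++ (C ++ t') := by
        rw [heq]
        conv_lhs => rw [hC1]
        rw [List.append_assoc]
      exact List.append_cancel_left this
    have hClen : t.length + C.length = Aq.length := by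
      have := congrArg List.length hC1
      rw [List.length_append, FreeGroup.invRev_length] at this
      omega
    have hCne : C ≠ [] := by
      intro hc
      rw [hc] at hClen
      simp at hClen
      omega
    have hprod : listProd W (p :: q :: ps') = yel W p * listProd W (q :: ps') := by
      simp [listProd]
    have hPW' : listProd W (q :: ps') = FreeGroup.mk (Aq ++ Z') := by
      rw [← hPW, FreeGroup.mk_toWord]
    have hmk : listProd W (p :: q :: ps') = FreeGroup.mk (A ++ (C ++ Z')) := by
      rw [hprod, hPW']
      have : yel W p = FreeGroup.mk (A ++ t) := by rw [yel, hYp]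
      rw [this, FreeGroup.mul_mk]
      have hA : (A ++ t) ++ (Aq ++ Z') = A ++ (t ++ (FreeGroup.invRev t ++ (C ++ Z'))) := by
        conv_lhs => rw [hC1]
        simp [List.append_assoc]
      rw [hA, mk_cancel]
    have hrdCZ : Rd (C ++ Z') := by
      have hsuf : C ++ Z' <:+ (listProd W (q :: ps')).toWord := by
        rw [hPW]
        exact ⟨FreeGroup.invRev t, by rw [← List.append_assoc, ← hC1]⟩
      exact (rd_toWord _).suffix hsuf
    have hrdnew : Rd (A ++ (C ++ Z')) := by
      refine List.isChain_append.2 ⟨?_, hrdCZ, ?_⟩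
      · exact (rd_Yw W hd1 hrd p).prefix ⟨t, hYp.symm⟩
      · intro x hx z hz
        refine hjunc x hx z ?_
        rw [List.head?_append_of_ne_nil _ hCne] at hz
        rw [hC2, List.head?_append_of_ne_nil _ hCne]
        exact hz
    have htw : (listProd W (p :: q :: ps')).toWord = A ++ (C ++ Z') := by
      rw [hmk, FreeGroup.toWord_mk, hrdnew.reduce_eq]
    refine ⟨A, t, C ++ Z', hYp, htp, htw, ?_⟩
    have hPWlen : Aq.length + Z'.length = ((listProd W (q :: ps')).toWord).length := by
      rw [hPW, List.length_append]
    rw [htw]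
    simp only [List.length_append, List.length_cons] at *
    omega

end Conj

lemma not_chain'_split {β : Type*} {R : β → β → Prop} :
    ∀ {L : List β}, ¬ List.Chain' R L → ∃ l1 u v l2, L = l1 ++ u :: v :: l2 ∧ ¬ R u v := by
  intro L
  induction L with
  | nil => intro h; exact absurd List.isChain_nil h
  | cons p t ih =>
    intro h
    cases t with
    | nil => exact absurd (List.isChain_singleton p) h
    | cons q t2 =>
      rw [List.Chain', List.isChain_cons_cons] at h
      by_cases hR : R p q
      · have h2 : ¬ List.Chain' R (q :: t2) := fun hc => h ⟨hR, hc⟩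
        obtain ⟨l1, u, v, l2, heq, huv⟩ := ih h2
        exact ⟨p :: l1, u, v, l2, by rw [List.cons_append, ← heq], huv⟩
      · exact ⟨[], p, q, t2, rfl, hR⟩

section Conj2
variable {n : ℕ} (W : Fin n → List (Fin n × Bool))
variable (hd1 : ∀ (i : Fin n), ∀ x ∈ (W i).head?, x.1 ≠ i)
variable (hd2 : ∀ (i j : Fin n) (u : List (Fin n × Bool)) (b : Bool),
    i ≠ j → W j ≠ u ++ (i, b) :: W i)

lemma yel_inv (p : Fin n × Bool) : yel W (p.1, !p.2) = (yel W p)⁻¹ := by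
  rw [yel, yel, FreeGroup.inv_mk, invRev_Yw]

lemma listProd_append (l1 l2 : List (Fin n × Bool)) :
    listProd W (l1 ++ l2) = listProd W l1 * listProd W l2 := by
  simp [listProd]

include hd1 hd2 in
lemma W_nil_of_prod (hrd : ∀ i, Rd (W i)) (k : Fin n) :
    ∀ (m : ℕ) (ps : List (Fin n × Bool)), ps.length ≤ m →
      listProd W ps = FreeGroup.of k → W k = [] := by
  intro m
  induction m with
  | zero =>
    intro ps hlen hprod
    rw [List.length_eq_zero_iff.1 (Nat.le_zero.1 hlen)] at hprod
    simp [listProd] at hprod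
  | succ m ih =>
    intro ps hlen hprod
    by_cases hch : List.Chain' (fun u v => ¬(u.1 = v.1 ∧ v.2 = !u.2)) ps
    · cases ps with
      | nil =>
        simp [listProd] at hprod
      | cons p ps' =>
        have hchain : List.Chain (fun u v => ¬(u.1 = v.1 ∧ v.2 = !u.2)) p ps' := hch
        obtain ⟨A, t, Z, hYp, ht, htw, hlenw⟩ := chain_lemma W hd1 hd2 hrd ps' p hchain
        rw [hprod, FreeGroup.toWord_of] at htw hlenw
        simp at hlenw
        subst hlenw
        have hyp : yel W p = FreeGroup.of k := by
          have : listProd W [p] = yel W p := by simp [listProd]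
          rw [← this, hprod]
        have hYw : Yw W p = [(k, true)] := by
          rw [← toWord_yel W hd1 hrd p, hyp, FreeGroup.toWord_of]
        have hWnil : W p.1 = [] := by
          have := congrArg List.length hYw
          rw [length_Yw] at this
          simp at this
          exact this
        have hp : p = (k, true) := by
          rw [Yw, hWnil] at hYw
          simpa [FreeGroup.invRev] using hYw
        rw [← hWnil, hp]
    · obtain ⟨l1, u, v, l2, heq, huv⟩ := not_chain'_split hch
      simp only [not_not] at huv
      have hv : v = (u.1, !u.2) := Prod.ext huv.1.symm huv.2
      have hthis : listProd W [v] = (listProd W [u])⁻¹ := by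
        simp only [listProd, List.map_cons, List.map_nil, List.prod_cons, List.prod_nil,
          mul_one]
        rw [hv, yel_inv]
      have hprod2 : listProd W (l1 ++ l2) = FreeGroup.of k := by
        rw [← hprod, heq]
        rw [show u :: v :: l2 = [u] ++ [v] ++ l2 by simp]
        simp only [listProd_append]
        rw [hthis]
        group
      have hlen2 : (l1 ++ l2).length ≤ m := by
        have := congrArg List.length heq
        simp only [List.length_append, List.length_cons] at this ⊢
        omega
      exact ih (l1 ++ l2) hlen2 hprod2

include hd1 hd2 in
lemma W_nil_of_mem_closure (hrd : ∀ i, Rd (W i)) (k : Fin n)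
    (hk : FreeGroup.of k ∈ Subgroup.closure (Set.range (fun i => yel W (i, true)))) :
    W k = [] := by
  set S := Set.range (fun i => yel W (i, true)) with hS
  have h1 : FreeGroup.of k ∈ Submonoid.closure (S ∪ S⁻¹) := by
    rw [← Subgroup.closure_toSubmonoid]
    exact hk
  obtain ⟨l, hl, hlp⟩ := Submonoid.exists_list_of_mem_closure h1
  have : ∃ ps : List (Fin n × Bool), listProd W ps = l.prod := by
    clear hlp
    induction l with
    | nil => exact ⟨[], by simp [listProd]⟩
    | cons y l ihl =>
      have hy := hl y List.mem_cons_self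
      obtain ⟨ps', hps'⟩ := ihl (fun z hz => hl z (List.mem_cons_of_mem y hz))
      rcases hy with hy | hy
      · obtain ⟨i, hi⟩ := hy
        refine ⟨(i, true) :: ps', ?_⟩
        rw [show (i, true) :: ps' = [(i,true)] ++ ps' by simp, listProd_append, hps',
          List.prod_cons]
        congr 1
        simpa [listProd] using hi
      · rw [Set.mem_inv] at hy
        obtain ⟨i, hi⟩ := hy
        refine ⟨(i, false) :: ps', ?_⟩
        rw [show (i, false) :: ps' = [(i,false)] ++ ps' by simp, listProd_append, hps',
          List.prod_cons]
        congr 1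
        have : listProd W [(i, false)] = yel W (i, false) := by simp [listProd]
        rw [this, show ((i : Fin n), false) = ((i, true).1, !(i, true).2) from rfl, yel_inv]
        have hi' : yel W (i, true) = y⁻¹ := hi
        rw [hi']
        simp
  obtain ⟨ps, hps⟩ := this
  exact W_nil_of_prod W hd1 hd2 hrd k ps.length ps le_rfl (by rw [hps, hlp])

end Conj2

section Main

open FreeGroup

variable {n : ℕ}

lemma xg_val (i : Fin n) : xg n i.val = FreeGroup.of i := by
  rw [xg, dif_pos i.isLt]

lemma mk_single_inv_conj (i : Fin n) (b : Bool) :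
    (FreeGroup.mk [(i, b)])⁻¹ * FreeGroup.of i * FreeGroup.mk [(i, b)] = FreeGroup.of i := by
  cases b
  · have h : FreeGroup.mk [(i, false)] = (FreeGroup.of i)⁻¹ := by
      rw [show (FreeGroup.of i : FreeGroup (Fin n)) = FreeGroup.mk [(i, true)] from rfl,
        FreeGroup.inv_mk]
      rfl
    rw [h]
    group
  · rw [show (FreeGroup.mk [(i, true)] : FreeGroup (Fin n)) = FreeGroup.of i from rfl]
    group

/-- `PConjSet` is closed under the group operations. -/
def pconjSubgroup (n : ℕ) : Subgroup (MulAut (FreeGroup (Fin n))) where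
  carrier := PConjSet n
  one_mem' := ⟨fun _ => 1, fun i => by simp⟩
  mul_mem' := by
    rintro α β ⟨u, hu⟩ ⟨v, hv⟩
    refine ⟨fun i => u i * α (v i), fun i => ?_⟩
    have : (α * β) (FreeGroup.of i) = α (β (FreeGroup.of i)) := rfl
    beta_reduce
    rw [this, hv i, _root_.map_mul, _root_.map_mul, _root_.map_inv, hu i]
    group
  inv_mem' := by
    rintro α ⟨u, hu⟩
    refine ⟨fun i => α⁻¹ ((u i)⁻¹), fun i => ?_⟩
    apply α.injective
    have h1 : ∀ x, α (α⁻¹ x) = x := fun x => α.apply_symm_apply x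
    beta_reduce
    rw [_root_.map_mul, _root_.map_mul, _root_.map_inv, h1, h1, hu i]
    group

end Main

section Main2
open FreeGroup

variable {n : ℕ} (a : ℕ → ℕ → MulAut (FreeGroup (Fin n)))
variable (ha : ∀ i j, i < n → j < n → i ≠ j → IsAlpha n i j (a i j))

lemma mk_single_true (i : Fin n) : FreeGroup.mk [(i, true)] = FreeGroup.of i := rfl

lemma mk_single_false (i : Fin n) : FreeGroup.mk [(i, false)] = (FreeGroup.of i)⁻¹ := by
  rw [show (FreeGroup.of i : FreeGroup (Fin n)) = FreeGroup.mk [(i, true)] from rfl,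
    FreeGroup.inv_mk]
  rfl

lemma mulaut_eq_one {α : MulAut (FreeGroup (Fin n))}
    (h : ∀ i, α (FreeGroup.of i) = FreeGroup.of i) : α = 1 := by
  have hh : MulEquiv.toMonoidHom α = MonoidHom.id (FreeGroup (Fin n)) :=
    FreeGroup.ext_hom _ _ (by simpa using h)
  exact MulEquiv.ext fun x => DFunLike.congr_fun hh x

include ha in
lemma alpha_self (i j : Fin n) (hij : i ≠ j) :
    a i.val j.val (FreeGroup.of i) =
      (FreeGroup.of j)⁻¹ * FreeGroup.of i * FreeGroup.of j := by
  have h := (ha i.val j.val i.isLt j.isLt (fun hc => hij (Fin.ext hc))).1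
  rwa [xg_val, xg_val] at h

include ha in
lemma alpha_other (i j k : Fin n) (hij : i ≠ j) (hki : k ≠ i) :
    a i.val j.val (FreeGroup.of k) = FreeGroup.of k := by
  have h := (ha i.val j.val i.isLt j.isLt (fun hc => hij (Fin.ext hc))).2
      k.val k.isLt (fun hc => hki (Fin.ext hc))
  rwa [xg_val] at h

include ha in
lemma alpha_inv_self (i j : Fin n) (hij : i ≠ j) :
    (a i.val j.val)⁻¹ (FreeGroup.of i) =
      FreeGroup.of j * FreeGroup.of i * (FreeGroup.of j)⁻¹ := by
  apply (a i.val j.val).injective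
  have h1 : ∀ x, (a i.val j.val) ((a i.val j.val)⁻¹ x) = x :=
    fun x => (a i.val j.val).apply_symm_apply x
  rw [h1, _root_.map_mul, _root_.map_mul, _root_.map_inv, alpha_self a ha i j hij,
    alpha_other a ha i j j hij (fun hc => hij hc.symm)]
  group

include ha in
lemma alpha_inv_other (i j k : Fin n) (hij : i ≠ j) (hki : k ≠ i) :
    (a i.val j.val)⁻¹ (FreeGroup.of k) = FreeGroup.of k := by
  apply (a i.val j.val).injective
  have h1 : ∀ x, (a i.val j.val) ((a i.val j.val)⁻¹ x) = x :=
    fun x => (a i.val j.val).apply_symm_apply x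
  rw [h1, alpha_other a ha i j k hij hki]

include ha in
lemma alpha_mem (i j : Fin n) (hij : i ≠ j) :
    a i.val j.val ∈
      Subgroup.closure {g | ∃ i' j', i' < n ∧ j' < n ∧ i' ≠ j' ∧ g = a i' j'} :=
  Subgroup.subset_closure ⟨i.val, j.val, i.isLt, j.isLt, fun hc => hij (Fin.ext hc), rfl⟩

include ha in
lemma main_ind : ∀ (N : ℕ) (α : MulAut (FreeGroup (Fin n))) (w : Fin n → FreeGroup (Fin n)),
    (∀ i, α (FreeGroup.of i) = (w i)⁻¹ * FreeGroup.of i * w i) →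
    (∑ i, ((w i).toWord).length ≤ N) →
    α ∈ Subgroup.closure {g | ∃ i' j', i' < n ∧ j' < n ∧ i' ≠ j' ∧ g = a i' j'} := by
  intro N
  induction N with
  | zero =>
    intro α w hw hsum
    have hall : ∀ i, w i = 1 := by
      intro i
      have h1 := (Finset.sum_eq_zero_iff.1 (Nat.le_zero.1 hsum)) i (Finset.mem_univ i)
      rw [← FreeGroup.toWord_eq_nil_iff]
      exact List.length_eq_zero_iff.1 h1
    have hα : α = 1 := mulaut_eq_one (fun i => by rw [hw i, hall i]; group)
    rw [hα]
    exact Subgroup.one_mem _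
  | succ N ih =>
    intro α w hw hsum
    by_cases hA : ∃ (i : Fin n) (b : Bool) (t : List (Fin n × Bool)),
        (w i).toWord = (i, b) :: t
    · -- strip a leading xᵢ^{±1} from w i
      obtain ⟨i, b, t, ht⟩ := hA
      have hrdt : Rd t := by
        have h0 := rd_toWord (w i)
        rw [ht] at h0
        exact (List.isChain_cons.mp h0).2
      have hwi : w i = FreeGroup.mk [(i, b)] * FreeGroup.mk t := by
        rw [FreeGroup.mul_mk]
        conv_lhs => rw [← FreeGroup.mk_toWord (x := w i), ht]
        rfl
      have hwcon : α (FreeGroup.of i) =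
          (FreeGroup.mk t)⁻¹ * FreeGroup.of i * FreeGroup.mk t := by
        rw [hw i, hwi]
        have hg : (FreeGroup.mk [(i,b)] * FreeGroup.mk t)⁻¹ * FreeGroup.of i *
            (FreeGroup.mk [(i,b)] * FreeGroup.mk t) =
            (FreeGroup.mk t)⁻¹ *
              ((FreeGroup.mk [(i,b)])⁻¹ * FreeGroup.of i * FreeGroup.mk [(i,b)]) *
              FreeGroup.mk t := by group
        rw [hg, mk_single_inv_conj i b]
      have hwprop : ∀ k, α (FreeGroup.of k) =
          ((Function.update w i (FreeGroup.mk t)) k)⁻¹ * FreeGroup.of k *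
            (Function.update w i (FreeGroup.mk t)) k := by
        intro k
        by_cases hk : k = i
        · subst hk; rw [Function.update_self]; exact hwcon
        · rw [Function.update_of_ne hk]; exact hw k
      have htWmk : (FreeGroup.mk t).toWord = t := hrdt.toWord_mk
      have hsum' : ∑ k, (((Function.update w i (FreeGroup.mk t)) k).toWord).length ≤ N := by
        have hfun : (fun k => (((Function.update w i (FreeGroup.mk t)) k).toWord).length) =
            Function.update (fun k => ((w k).toWord).length) i t.length := by
          funext k
          by_cases hk : k = i
          · subst hk; simp [htWmk]
          · simp [Function.update_of_ne hk]
        have e1 : ∑ k, (((Function.update w i (FreeGroup.mk t)) k).toWord).length =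
            t.length + ∑ k ∈ Finset.univ.erase i, ((w k).toWord).length := by
          rw [hfun, Finset.sum_update_of_mem (Finset.mem_univ i), ← Finset.erase_eq]
        have e2 : ∑ k, ((w k).toWord).length =
            ((w i).toWord).length + ∑ k ∈ Finset.univ.erase i, ((w k).toWord).length :=
          (Finset.add_sum_erase _ _ (Finset.mem_univ i)).symm
        have e3 : ((w i).toWord).length = t.length + 1 := by rw [ht]; simp
        omega
      exact ih α _ hwprop hsum'
    · by_cases hB : ∃ (i j : Fin n) (b : Bool) (u : List (Fin n × Bool)),
          i ≠ j ∧ (w j).toWord = u ++ (i, b) :: (w i).toWord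
      · -- the "good case": compose with a generator to shorten w j
        obtain ⟨i, j, b, u, hij, hWj⟩ := hB
        have hcval : FreeGroup.mk [(i, b)] =
            cond b (FreeGroup.of i) (FreeGroup.of i)⁻¹ := by
          cases b
          · exact mk_single_false i
          · exact mk_single_true i
        have hAj : (cond b (a j.val i.val)⁻¹ (a j.val i.val)) (FreeGroup.of j) =
            FreeGroup.mk [(i, b)] * FreeGroup.of j * (FreeGroup.mk [(i, b)])⁻¹ := by
          cases b
          · simp only [Bool.cond_false] at hcval ⊢
            rw [hcval, alpha_self a ha j i (fun hc => hij hc.symm)]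
            group
          · simp only [Bool.cond_true] at hcval ⊢
            rw [hcval, alpha_inv_self a ha j i (fun hc => hij hc.symm)]
        have hAk : ∀ k, k ≠ j →
            (cond b (a j.val i.val)⁻¹ (a j.val i.val)) (FreeGroup.of k) = FreeGroup.of k := by
          intro k hk
          cases b
          · simpa only [Bool.cond_false] using alpha_other a ha j i k (fun hc => hij hc.symm) hk
          · simpa only [Bool.cond_true] using
              alpha_inv_other a ha j i k (fun hc => hij hc.symm) hk
        have hαc : α (FreeGroup.mk [(i, b)]) =
            (w i)⁻¹ * FreeGroup.mk [(i, b)] * w i := by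
          cases b
          · simp only [Bool.cond_false] at hcval
            rw [hcval, _root_.map_inv, hw i]
            group
          · simp only [Bool.cond_true] at hcval
            rw [hcval]
            exact hw i
        have hwj : w j = FreeGroup.mk u * FreeGroup.mk [(i, b)] * w i := by
          conv_lhs => rw [← FreeGroup.mk_toWord (x := w j), hWj]
          rw [show u ++ (i, b) :: (w i).toWord = u ++ ([(i, b)] ++ (w i).toWord) from rfl]
          rw [← FreeGroup.mul_mk, ← FreeGroup.mul_mk, FreeGroup.mk_toWord, mul_assoc]
        have hα'j : (α * (cond b (a j.val i.val)⁻¹ (a j.val i.val))) (FreeGroup.of j) =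
            (FreeGroup.mk u * w i)⁻¹ * FreeGroup.of j * (FreeGroup.mk u * w i) := by
          have h0 : (α * (cond b (a j.val i.val)⁻¹ (a j.val i.val))) (FreeGroup.of j) =
              α ((cond b (a j.val i.val)⁻¹ (a j.val i.val)) (FreeGroup.of j)) := rfl
          rw [h0, hAj, _root_.map_mul, _root_.map_mul, _root_.map_inv, hαc, hw j, hwj]
          group
        have hwprop : ∀ k, (α * (cond b (a j.val i.val)⁻¹ (a j.val i.val))) (FreeGroup.of k) =
            ((Function.update w j (FreeGroup.mk u * w i)) k)⁻¹ * FreeGroup.of k *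
              (Function.update w j (FreeGroup.mk u * w i)) k := by
          intro k
          by_cases hk : k = j
          · subst hk; rw [Function.update_self]; exact hα'j
          · rw [Function.update_of_ne hk]
            have h0 : (α * (cond b (a j.val i.val)⁻¹ (a j.val i.val))) (FreeGroup.of k) =
                α ((cond b (a j.val i.val)⁻¹ (a j.val i.val)) (FreeGroup.of k)) := rfl
            rw [h0, hAk k hk, hw k]
        have hzlen : ((FreeGroup.mk u * w i).toWord).length ≤
            u.length + ((w i).toWord).length := by
          have h1 : FreeGroup.mk u * w i = FreeGroup.mk (u ++ (w i).toWord) := by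
            rw [← FreeGroup.mul_mk, FreeGroup.mk_toWord]
          rw [h1]
          have h2 := FreeGroup.norm_mk_le (L₁ := u ++ (w i).toWord)
          simpa [FreeGroup.norm] using h2
        have hsum' : ∑ k, (((Function.update w j (FreeGroup.mk u * w i)) k).toWord).length
            ≤ N := by
          have hfun : (fun k => (((Function.update w j (FreeGroup.mk u * w i)) k).toWord).length) =
              Function.update (fun k => ((w k).toWord).length) j
                (((FreeGroup.mk u * w i).toWord).length) := by
            funext k
            by_cases hk : k = j
            · subst hk; simp
            · simp [Function.update_of_ne hk]
          have e1 : ∑ k, (((Function.update w j (FreeGroup.mk u * w i)) k).toWord).length =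
              ((FreeGroup.mk u * w i).toWord).length +
                ∑ k ∈ Finset.univ.erase j, ((w k).toWord).length := by
            rw [hfun, Finset.sum_update_of_mem (Finset.mem_univ j), ← Finset.erase_eq]
          have e2 : ∑ k, ((w k).toWord).length =
              ((w j).toWord).length + ∑ k ∈ Finset.univ.erase j, ((w k).toWord).length :=
            (Finset.add_sum_erase _ _ (Finset.mem_univ j)).symm
          have e3 : ((w j).toWord).length = u.length + 1 + ((w i).toWord).length := by
            rw [hWj]; simp; omega
          omega
        have hmem := ih _ _ hwprop hsum'
        have hAmem : (cond b (a j.val i.val)⁻¹ (a j.val i.val)) ∈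
            Subgroup.closure {g | ∃ i' j', i' < n ∧ j' < n ∧ i' ≠ j' ∧ g = a i' j'} := by
          cases b
          · simpa only [Bool.cond_false] using alpha_mem a ha j i (fun hc => hij hc.symm)
          · simpa only [Bool.cond_true] using
              Subgroup.inv_mem _ (alpha_mem a ha j i (fun hc => hij hc.symm))
        have hfin : α = (α * (cond b (a j.val i.val)⁻¹ (a j.val i.val))) *
            (cond b (a j.val i.val)⁻¹ (a j.val i.val))⁻¹ := by group
        rw [hfin]
        exact Subgroup.mul_mem _ hmem (Subgroup.inv_mem _ hAmem)
      · -- endgame : no reduction possible, so α is the identity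
        push_neg at hA hB
        have hd1 : ∀ (i : Fin n), ∀ x ∈ ((w i).toWord).head?, x.1 ≠ i := by
          intro i x hx hxi
          cases hWi : (w i).toWord with
          | nil => rw [hWi] at hx; simp at hx
          | cons y tl =>
            rw [hWi] at hx
            simp only [List.head?_cons, Option.mem_some_iff] at hx
            refine hA i x.2 tl ?_
            rw [hWi]
            congr 1
            subst y
            exact Prod.ext hxi rfl
        have hd2 : ∀ (i j : Fin n) (u : List (Fin n × Bool)) (b : Bool),
            i ≠ j → (w j).toWord ≠ u ++ (i, b) :: (w i).toWord :=
          fun i j u b hij' => hB i j b u hij'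
        have hrd : ∀ i, Rd ((w i).toWord) := fun i => rd_toWord (w i)
        have hyel : ∀ i : Fin n, yel (fun k => (w k).toWord) (i, true) = α (FreeGroup.of i) := by
          intro i
          rw [yel, Yw, hw i]
          rw [show FreeGroup.invRev ((w i).toWord) ++ ((i, true) :: (w i).toWord) =
            FreeGroup.invRev ((w i).toWord) ++ ([(i, true)] ++ (w i).toWord) from rfl]
          rw [← FreeGroup.mul_mk, ← FreeGroup.mul_mk, ← FreeGroup.inv_mk, FreeGroup.mk_toWord,
            mk_single_true, mul_assoc]
        have htop : Subgroup.closure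
            (Set.range (fun i => yel (fun k => (w k).toWord) (i, true))) = ⊤ := by
          have h1 : Subgroup.map (MulEquiv.toMonoidHom α)
              (Subgroup.closure (Set.range (FreeGroup.of : Fin n → FreeGroup (Fin n)))) =
              Subgroup.closure ((MulEquiv.toMonoidHom α) '' Set.range FreeGroup.of) :=
            MonoidHom.map_closure _ _
          rw [FreeGroup.closure_range_of,
            Subgroup.map_top_of_surjective _ α.surjective] at h1
          have h2 : (fun i : Fin n => yel (fun k => (w k).toWord) (i, true)) =
              (MulEquiv.toMonoidHom α) ∘ (FreeGroup.of : Fin n → FreeGroup (Fin n)) :=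
            funext fun i => hyel i
          rw [h2, Set.range_comp, ← h1]
        have hWnil : ∀ k : Fin n, (w k).toWord = [] := fun k =>
          W_nil_of_mem_closure (fun k => (w k).toWord) hd1 hd2 hrd k
            (by rw [htop]; trivial)
        have hα : α = 1 := mulaut_eq_one (fun i => by
          rw [hw i, FreeGroup.toWord_eq_nil_iff.1 (hWnil i)]; group)
        rw [hα]
        exact Subgroup.one_mem _

end Main2

/-- For `n ≥ 1`, the set `PConj_n` of basis-conjugating automorphisms
is a subgroup of `Aut(F_n)`, namely it coincides with the subgroup generated by the
automorphisms `α_{ij}`, `1 ≤ i ≠ j ≤ n` (indices `0`-based here). -/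
theorem pconj_eq_closure_alpha (n : ℕ) (hn : 1 ≤ n)
    (a : ℕ → ℕ → MulAut (FreeGroup (Fin n)))
    (ha : ∀ i j, i < n → j < n → i ≠ j → IsAlpha n i j (a i j)) :
    PConjSet n =
      ↑(Subgroup.closure {g | ∃ i j, i < n ∧ j < n ∧ i ≠ j ∧ g = a i j}) := by
  apply Set.Subset.antisymm
  · rintro α ⟨w, hw⟩
    exact main_ind a ha (∑ i, ((w i).toWord).length) α w hw le_rfl
  · intro α hα
    have hle : Subgroup.closure {g | ∃ i j, i < n ∧ j < n ∧ i ≠ j ∧ g = a i j} ≤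
        pconjSubgroup n := by
      rw [Subgroup.closure_le]
      rintro g ⟨i, j, hi, hj, hij, rfl⟩
      refine ⟨fun k => if k = (⟨i, hi⟩ : Fin n) then FreeGroup.of (⟨j, hj⟩ : Fin n) else 1, ?_⟩
      intro k
      by_cases hk : k = (⟨i, hi⟩ : Fin n)
      · subst hk
        simp only [if_pos rfl]
        have h1 := (ha i j hi hj hij).1
        have e1 : xg n i = FreeGroup.of (⟨i, hi⟩ : Fin n) := by rw [xg, dif_pos hi]
        have e2 : xg n j = FreeGroup.of (⟨j, hj⟩ : Fin n) := by rw [xg, dif_pos hj]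
        rw [e1, e2] at h1
        exact h1
      · beta_reduce
        rw [if_neg hk]
        have h1 := (ha i j hi hj hij).2 k.val k.isLt (fun hc => hk (Fin.ext hc))
        rw [xg_val] at h1
        rw [h1]
        group
    exact hle hα

end LoopBraidGroups
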